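/- Let W be an n×n real matrix, ρ ∈ ℝ^n with I_n − W·diag(ρ) invertible and det(I_{nT} − I_T ⊗ (W·diag(ρ))) > 0, let T ≥ 1 and i ∈ {1,…,n}. Then the real function s ↦ ln det(I_{nT} − I_T ⊗ (W·diag(ρ + s e_i))) is differentiable at s = 0 with derivative −T·[(I_n − W·diag(ρ))⁻¹ W]_{ii}, where e_i is the i-th standard basis vector of ℝ^n. -/
import Mathlib


open Matrix Kronecker Polynomial

/-- Derivative of `s ↦ det (1 + s • M)` at `0` is the trace. -/
lemma hasDerivAt_det_one_add_smul {n : ℕ} (M : Matrix (Fin n) (Fin n) ℝ) :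
    HasDerivAt (fun s : ℝ => (1 + s • M).det) M.trace 0 := by
  have h : ∀ s : ℝ, (1 + s • M).det =
      1 + M.trace * s + ((det (1 + (X : ℝ[X]) • M.map C)).divX.divX).eval s * s ^ 2 :=
    fun s => Matrix.det_one_add_smul s M
  set P := (det (1 + (X : ℝ[X]) • M.map C)).divX.divX with hP
  have hp : HasDerivAt (fun s : ℝ => P.eval s) (P.derivative.eval 0) 0 := P.hasDerivAt 0
  have h2 : HasDerivAt (fun s : ℝ => s ^ 2) 0 0 := by
    simpa using hasDerivAt_pow 2 (0 : ℝ)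
  have hlin : HasDerivAt (fun s : ℝ => M.trace * s) M.trace 0 := by
    simpa using (hasDerivAt_id (0 : ℝ)).const_mul M.trace
  have hsum : HasDerivAt
      (fun s : ℝ => 1 + M.trace * s + P.eval s * s ^ 2)
      (0 + M.trace + (P.derivative.eval 0 * (0:ℝ) ^ 2 + P.eval 0 * 0)) 0 :=
    ((hasDerivAt_const (0:ℝ) (1:ℝ)).add hlin).add (hp.mul h2)
  have hsum' : HasDerivAt
      (fun s : ℝ => 1 + M.trace * s + P.eval s * s ^ 2) M.trace 0 := by
    simpa using hsum
  exact hsum'.congr_of_eventuallyEq (Filter.Eventually.of_forall fun s => (h s))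

/-- The map `s ↦ ln det(I_{nT} − I_T ⊗ (W·diag(ρ + s e_i)))` is differentiable at
`s = 0` with derivative `−T·[(I_n − W·diag ρ)⁻¹ W]_{ii}`. -/
theorem sar_logdet_derivative
    (n T : ℕ) (hT : 1 ≤ T)
    (W : Matrix (Fin n) (Fin n) ℝ) (ρ : Fin n → ℝ) (i : Fin n)
    (hinv : IsUnit ((1 : Matrix (Fin n) (Fin n) ℝ) - W * Matrix.diagonal ρ))
    (hdet : 0 < ((1 : Matrix (Fin T × Fin n) (Fin T × Fin n) ℝ) -
        (1 : Matrix (Fin T) (Fin T) ℝ) ⊗ₖ (W * Matrix.diagonal ρ)).det) :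
    HasDerivAt
      (fun s : ℝ => Real.log
        (((1 : Matrix (Fin T × Fin n) (Fin T × Fin n) ℝ) -
            (1 : Matrix (Fin T) (Fin T) ℝ) ⊗ₖ
              (W * Matrix.diagonal (ρ + s • (Pi.single i 1 : Fin n → ℝ)))).det))
      (-(T : ℝ) * (((1 : Matrix (Fin n) (Fin n) ℝ) - W * Matrix.diagonal ρ)⁻¹ * W) i i)
      0 := by
  set A : Matrix (Fin n) (Fin n) ℝ := 1 - W * Matrix.diagonal ρ with hA
  set B : Matrix (Fin n) (Fin n) ℝ := W * Matrix.diagonal (Pi.single i 1) with hB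
  set Cm : Matrix (Fin n) (Fin n) ℝ := -(A⁻¹ * B) with hCm
  have hAdet : IsUnit A.det := (Matrix.isUnit_iff_isUnit_det A).mp hinv
  have hAdet0 : A.det ≠ 0 := hAdet.ne_zero
  have hAinv : A * A⁻¹ = 1 := Matrix.mul_nonsing_inv A hAdet
  -- the affine path
  have hpath : ∀ s : ℝ,
      (1 : Matrix (Fin n) (Fin n) ℝ) - W * Matrix.diagonal (ρ + s • (Pi.single i 1 : Fin n → ℝ))
        = A * (1 + s • Cm) := by
    intro s
    have h1 : Matrix.diagonal (ρ + s • (Pi.single i 1 : Fin n → ℝ))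
        = Matrix.diagonal ρ + s • Matrix.diagonal (Pi.single i 1) := by
      ext j k
      by_cases h : j = k <;> simp [Matrix.diagonal_apply, h]
    rw [h1, mul_add, Matrix.mul_smul]
    have h2 : A * (1 + s • Cm) = A - s • B := by
      rw [mul_add, mul_one, Matrix.mul_smul, hCm, mul_neg, ← Matrix.mul_assoc, hAinv,
        Matrix.one_mul, smul_neg, sub_eq_add_neg]
    rw [h2, hA, hB]
    abel
  -- Kronecker reduction
  have hkron : ∀ X : Matrix (Fin n) (Fin n) ℝ,
      ((1 : Matrix (Fin T × Fin n) (Fin T × Fin n) ℝ)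
        - (1 : Matrix (Fin T) (Fin T) ℝ) ⊗ₖ X).det = X.det ^ T → True := fun _ _ => trivial
  have hbig : ∀ X : Matrix (Fin n) (Fin n) ℝ,
      (1 : Matrix (Fin T × Fin n) (Fin T × Fin n) ℝ)
        - (1 : Matrix (Fin T) (Fin T) ℝ) ⊗ₖ X
      = (1 : Matrix (Fin T) (Fin T) ℝ) ⊗ₖ ((1 : Matrix (Fin n) (Fin n) ℝ) - X) := by
    intro X
    ext ⟨a, b⟩ ⟨c, d⟩
    simp [Matrix.kroneckerMap_apply, Matrix.sub_apply, Matrix.one_apply, Prod.ext_iff,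
      mul_sub, and_comm]
    aesop
  have hbigdet : ∀ X : Matrix (Fin n) (Fin n) ℝ,
      ((1 : Matrix (Fin T × Fin n) (Fin T × Fin n) ℝ)
        - (1 : Matrix (Fin T) (Fin T) ℝ) ⊗ₖ X).det
      = ((1 : Matrix (Fin n) (Fin n) ℝ) - X).det ^ T := by
    intro X
    rw [hbig X, Matrix.det_kronecker, Matrix.det_one, one_pow, one_mul, Fintype.card_fin]
  -- key rewriting of the function
  have key : ∀ s : ℝ,
      (((1 : Matrix (Fin T × Fin n) (Fin T × Fin n) ℝ) -
          (1 : Matrix (Fin T) (Fin T) ℝ) ⊗ₖ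
            (W * Matrix.diagonal (ρ + s • (Pi.single i 1 : Fin n → ℝ)))).det)
        = (A.det * (1 + s • Cm).det) ^ T := by
    intro s
    rw [hbigdet, hpath s, Matrix.det_mul]
  -- trace computation
  have htrace : Cm.trace = -((A⁻¹ * W) i i) := by
    rw [hCm, Matrix.trace_neg, hB, ← Matrix.mul_assoc]
    congr 1
    rw [Matrix.trace]
    have : ∀ j, ((A⁻¹ * W * Matrix.diagonal (Pi.single i 1)).diag j)
        = (A⁻¹ * W) j j * (Pi.single i 1 : Fin n → ℝ) j := by
      intro j
      simp [Matrix.diag, Matrix.mul_diagonal]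
    simp only [this]
    rw [Finset.sum_eq_single i]
    · simp
    · intro j _ hj
      simp [Pi.single_apply, hj]
    · simp
  -- derivative of determinant
  have hg : HasDerivAt (fun s : ℝ => (1 + s • Cm).det) Cm.trace 0 :=
    hasDerivAt_det_one_add_smul Cm
  have hh : HasDerivAt (fun s : ℝ => (A.det * (1 + s • Cm).det) ^ T)
      ((T : ℝ) * (A.det * (1 + (0:ℝ) • Cm).det) ^ (T - 1) * (A.det * Cm.trace)) 0 :=
    (hg.const_mul A.det).pow T
  have hzero : (1 + (0:ℝ) • Cm).det = 1 := by simp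
  have hne : (A.det * (1 + (0:ℝ) • Cm).det) ^ T ≠ 0 := by
    rw [hzero, mul_one]
    exact pow_ne_zero _ hAdet0
  have hlog := hh.log hne
  have : HasDerivAt
      (fun s : ℝ => Real.log ((A.det * (1 + s • Cm).det) ^ T))
      (-(T : ℝ) * (A⁻¹ * W) i i) 0 := by
    convert hlog using 1
    rw [hzero, mul_one, htrace]
    have hpow : A.det ^ (T - 1) * A.det = A.det ^ T := by
      rw [← pow_succ, Nat.sub_add_cancel hT]
    have hre : (T : ℝ) * A.det ^ (T - 1) * (A.det * -((A⁻¹ * W) i i))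
        = (-(T : ℝ) * (A⁻¹ * W) i i) * A.det ^ T := by
      rw [← hpow]; ring
    rw [hre, mul_div_assoc, div_self (pow_ne_zero _ hAdet0), mul_one]
  exact this.congr_of_eventuallyEq (Filter.Eventually.of_forall fun s => by simpa using congrArg Real.log (key s))
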